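/- Let E be a low-defect expression with associated low-defect tree T and associated low-defect polynomial f. Then the leading coefficient of f (the coefficient of the product of all variables of f) equals the product of all the vertex labels of T. -/

import Mathlib

/-- `CpxW n k` : the positive integer `n` can be written using exactly `k` ones,
with an arbitrary combination of additions and multiplications. -/
inductive CpxW : ℕ → ℕ → Prop
  | one : CpxW 1 1
  | add {a b m n : ℕ} : CpxW a m → CpxW b n → CpxW (a + b) (m + n)
  | mul {a b m n : ℕ} : CpxW a m → CpxW b n → CpxW (a * b) (m + n)

/-- The integer complexity `‖n‖`. -/
noncomputable def cpx (n : ℕ) : ℕ := sInf {k | CpxW n k}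

/-- Low-defect expressions: built from positive integer constants (rule `const`,
positivity recorded in `LDE.WF`), products (rule `mul`, disjointness of the
variables recorded in `LDE.WF`) and `E·x + c` (rule `step`, freshness of `x`
recorded in `LDE.WF`).  Variables are indexed by natural numbers. -/
inductive LDE : Type
  | const (n : ℕ) : LDE
  | mul (E₁ E₂ : LDE) : LDE
  | step (E : LDE) (x : ℕ) (c : ℕ) : LDE

/-- The set of variables used by a low-defect expression. -/
def LDE.vars : LDE → Finset ℕ
  | .const _ => ∅
  | .mul E₁ E₂ => E₁.vars ∪ E₂.vars
  | .step E x _ => insert x E.vars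

/-- Well-formedness of a low-defect expression: constants are positive, the two
factors of a product use disjoint sets of variables, and the variable of
`E·x + c` does not occur in `E`. -/
def LDE.WF : LDE → Prop
  | .const n => 0 < n
  | .mul E₁ E₂ => E₁.WF ∧ E₂.WF ∧ Disjoint E₁.vars E₂.vars
  | .step E x c => E.WF ∧ x ∉ E.vars ∧ 0 < c

/-- The polynomial obtained by evaluating a low-defect expression. -/
noncomputable def LDE.poly : LDE → MvPolynomial ℕ ℤ
  | .const n => MvPolynomial.C (n : ℤ)
  | .mul E₁ E₂ => E₁.poly * E₂.poly
  | .step E x c => E.poly * MvPolynomial.X x + MvPolynomial.C (c : ℤ)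

/-- The complexity `‖E‖` of a low-defect expression. -/
noncomputable def LDE.cpx : LDE → ℕ
  | .const n => _root_.cpx n
  | .mul E₁ E₂ => E₁.cpx + E₂.cpx
  | .step E _ c => E.cpx + _root_.cpx c

/-- Low-defect trees: rooted trees whose vertices and edges are labeled by
natural numbers (positivity of the labels is recorded in `LDT.Pos`); a node
carries its label together with the list of its subtrees, each with the label of
the corresponding edge. -/
inductive LDT : Type
  | node (label : ℕ) (children : List (ℕ × LDT)) : LDT

/-- The label of the root. -/
def LDT.label : LDT → ℕ | .node n _ => n

/-- The children (edge label, subtree) of the root. -/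
def LDT.children : LDT → List (ℕ × LDT) | .node _ cs => cs

mutual
/-- All labels of a low-defect tree are positive. -/
def LDT.Pos : LDT → Prop
  | .node n cs => 0 < n ∧ LDT.PosAux cs

def LDT.PosAux : List (ℕ × LDT) → Prop
  | [] => True
  | c :: cs => 0 < c.1 ∧ c.2.Pos ∧ LDT.PosAux cs
end

/-- Isomorphism of labeled rooted trees: a root-preserving, label-preserving
graph isomorphism; concretely, the root labels agree and the children lists
match up to a permutation, recursively. -/
inductive LDT.Iso : LDT → LDT → Prop
  | node (n : ℕ) (cs₁ cs₂ : List (ℕ × LDT)) (σ : Fin cs₁.length ≃ Fin cs₂.length)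
      (hlab : ∀ i : Fin cs₁.length, (cs₁.get i).1 = (cs₂.get (σ i)).1)
      (hiso : ∀ i : Fin cs₁.length, LDT.Iso (cs₁.get i).2 (cs₂.get (σ i)).2) :
      LDT.Iso (.node n cs₁) (.node n cs₂)

/-- The low-defect tree `T(E)` associated to a low-defect expression `E`. -/
def LDE.tree : LDE → LDT
  | .const n => .node n []
  | .step E _ c => .node 1 [(c, E.tree)]
  | .mul E₁ E₂ => .node (E₁.tree.label * E₂.tree.label) (E₁.tree.children ++ E₂.tree.children)

/-- The subtree of a low-defect tree at a position (a path from the root, given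
by the list of child indices); `none` if there is no such vertex. -/
def LDT.sub? : LDT → List ℕ → Option LDT
  | t, [] => some t
  | t, i :: p =>
    match t.children[i]? with
    | some c => LDT.sub? c.2 p
    | none => none

/-- `p` is a vertex of `t` (vertices are encoded by their positions). -/
def LDT.IsVert (t : LDT) (p : List ℕ) : Prop := (t.sub? p).isSome

/-- The label of the vertex at position `p` (junk value `1` if `p` is not a
vertex). -/
def LDT.labelAt (t : LDT) (p : List ℕ) : ℕ := ((t.sub? p).map LDT.label).getD 1

/-- The list of children at position `p`. -/
def LDT.childrenAt (t : LDT) (p : List ℕ) : List (ℕ × LDT) :=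
  ((t.sub? p).map LDT.children).getD []

/-- The label of the edge joining the non-root vertex at position `q` to its
parent (junk value `1` if there is no such edge). -/
def LDT.edgeLabelAt (t : LDT) (q : List ℕ) : ℕ :=
  (((t.sub? q.dropLast).bind (fun s => s.children[q.getLast?.getD 0]?)).map
    Prod.fst).getD 1

mutual
/-- The list of all positions (vertices) of a low-defect tree. -/
def LDT.positions : LDT → List (List ℕ)
  | .node _ cs => [] :: LDT.positionsAux 0 cs

def LDT.positionsAux : ℕ → List (ℕ × LDT) → List (List ℕ)
  | _, [] => []
  | i, c :: cs => (c.2.positions.map (i :: ·)) ++ LDT.positionsAux (i + 1) cs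
end

/-- The finite set of vertices (positions) of a low-defect tree. -/
def LDT.vertFinset (t : LDT) : Finset (List ℕ) := t.positions.toFinset

/-- The finite set of edges of a low-defect tree, an edge being encoded by the
position of its lower (non-root) endpoint. -/
def LDT.edgeFinset (t : LDT) : Finset (List ℕ) := t.positions.toFinset.erase []

/-- The variable of `E` corresponding to the non-root vertex of `T(E)` at a given
position, under the canonical bijection between variables of `E` and non-root
vertices of `T(E)`. -/
def LDE.varAt : LDE → List ℕ → Option ℕ
  | .const _, _ => none
  | .step E x _, p =>
    match p with
    | 0 :: p' => if p' = [] then some x else E.varAt p'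
    | _ => none
  | .mul E₁ E₂, p =>
    match p with
    | i :: p' =>
      if i < E₁.tree.children.length then E₁.varAt (i :: p')
      else E₂.varAt ((i - E₁.tree.children.length) :: p')
    | [] => none

/-- The position of the non-root vertex of `T(E)` corresponding to a variable of
`E`, under the canonical bijection. -/
def LDE.posOf : LDE → ℕ → Option (List ℕ)
  | .const _, _ => none
  | .step E v _, x => if x = v then some [0] else (E.posOf x).map (0 :: ·)
  | .mul E₁ E₂, x =>
    match E₁.posOf x with
    | some p => some p
    | none => (E₂.posOf x).map (fun p =>
        match p with
        | i :: p' => (i + E₁.tree.children.length) :: p'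
        | [] => [])

/- ### Auxiliary material for the proof -/

mutual
/-- Product of all vertex labels of a tree, defined recursively. -/
def LDT.labelProd : LDT → ℕ
  | .node n cs => n * LDT.labelProdAux cs

def LDT.labelProdAux : List (ℕ × LDT) → ℕ
  | [] => 1
  | (_, t) :: cs => t.labelProd * LDT.labelProdAux cs
end

lemma LDT.labelAt_nil (t : LDT) : t.labelAt [] = t.label := by
  simp [LDT.labelAt, LDT.sub?]

lemma LDT.labelAt_cons (t : LDT) (i : ℕ) (p : List ℕ) {c : ℕ × LDT}
    (h : t.children[i]? = some c) : t.labelAt (i :: p) = c.2.labelAt p := by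
  have h' : t.children[i]? = some c := h
  simp [LDT.labelAt, LDT.sub?, h']

lemma LDT.shape_positionsAux (cs : List (ℕ × LDT)) (i : ℕ) :
    ∀ p ∈ LDT.positionsAux i cs, ∃ j p', i ≤ j ∧ p = j :: p' := by
  induction cs generalizing i with
  | nil => simp [LDT.positionsAux]
  | cons c cs ih =>
    intro p hp
    simp only [LDT.positionsAux, List.mem_append, List.mem_map] at hp
    rcases hp with ⟨q, _, rfl⟩ | hp
    · exact ⟨i, q, le_refl i, rfl⟩
    · obtain ⟨j, p', hj, rfl⟩ := ih (i+1) p hp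
      exact ⟨j, p', by omega, rfl⟩

mutual
theorem LDT.nodup_positions (t : LDT) : t.positions.Nodup := by
  cases t with
  | node n cs =>
    simp only [LDT.positions, List.nodup_cons]
    constructor
    · intro h
      obtain ⟨j, p', _, hp⟩ := LDT.shape_positionsAux cs 0 [] h
      cases hp
    · exact LDT.nodup_positionsAux cs 0

theorem LDT.nodup_positionsAux (cs : List (ℕ × LDT)) (i : ℕ) :
    (LDT.positionsAux i cs).Nodup := by
  cases cs with
  | nil => simp [LDT.positionsAux]
  | cons c cs =>
    simp only [LDT.positionsAux]
    refine List.Nodup.append ?_ (LDT.nodup_positionsAux cs (i+1)) ?_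
    · exact (LDT.nodup_positions c.2).map (fun a b hab => by
        injection hab)
    · intro p hp₁ hp₂
      simp only [List.mem_map] at hp₁
      obtain ⟨q, _, rfl⟩ := hp₁
      obtain ⟨j, p', hj, hp⟩ := LDT.shape_positionsAux cs (i+1) _ hp₂
      injection hp with h1 h2
      omega
end

mutual
theorem LDT.prod_positions (t : LDT) :
    (t.positions.map t.labelAt).prod = t.labelProd := by
  cases t with
  | node n cs =>
    simp only [LDT.positions, List.map_cons, List.prod_cons, LDT.labelProd]
    rw [LDT.labelAt_nil]
    show n * _ = n * _
    congr 1
    exact LDT.prod_positionsAux cs 0 (LDT.node n cs) (fun j => by simp [LDT.children])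

theorem LDT.prod_positionsAux (cs : List (ℕ × LDT)) (i : ℕ) (t : LDT)
    (h : ∀ j, t.children[i + j]? = cs[j]?) :
    ((LDT.positionsAux i cs).map t.labelAt).prod = LDT.labelProdAux cs := by
  cases cs with
  | nil => simp [LDT.positionsAux, LDT.labelProdAux]
  | cons c cs =>
    have h0 : t.children[i]? = some c := by simpa using h 0
    simp only [LDT.positionsAux, List.map_append, List.prod_append, List.map_map]
    have hmap : (t.labelAt ∘ (i :: ·)) = c.2.labelAt := by
      funext p
      exact LDT.labelAt_cons t i p h0
    rw [hmap, LDT.prod_positions c.2]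
    show c.2.labelProd * _ = LDT.labelProdAux (c :: cs)
    have : LDT.labelProdAux (c :: cs) = c.2.labelProd * LDT.labelProdAux cs := by
      obtain ⟨e, t'⟩ := c
      rfl
    rw [this]
    congr 1
    exact LDT.prod_positionsAux cs (i+1) t (fun j => by
      have := h (j+1)
      rwa [show i + (j+1) = i + 1 + j by omega] at this)
end

lemma LDT.prod_vertFinset (t : LDT) :
    (∏ p ∈ t.vertFinset, t.labelAt p) = t.labelProd := by
  rw [LDT.vertFinset, List.prod_toFinset _ (LDT.nodup_positions t), LDT.prod_positions]

lemma LDT.labelProdAux_append (cs₁ cs₂ : List (ℕ × LDT)) :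
    LDT.labelProdAux (cs₁ ++ cs₂) = LDT.labelProdAux cs₁ * LDT.labelProdAux cs₂ := by
  induction cs₁ with
  | nil => simp [LDT.labelProdAux]
  | cons c cs ih =>
    obtain ⟨e, t⟩ := c
    simp only [List.cons_append, LDT.labelProdAux]
    rw [ih, mul_assoc]

lemma LDT.labelProd_eq (t : LDT) : t.labelProd = t.label * LDT.labelProdAux t.children := by
  cases t; rfl

/-- The variables of `E.poly` are among `E.vars`. -/
lemma LDE.vars_poly_subset (E : LDE) : E.poly.vars ⊆ E.vars := by
  induction E with
  | const n =>
    show (MvPolynomial.C (n:ℤ)).vars ⊆ (∅ : Finset ℕ)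
    rw [MvPolynomial.vars_C]
  | mul E₁ E₂ ih₁ ih₂ =>
    refine (MvPolynomial.vars_mul _ _).trans ?_
    simp only [LDE.vars]
    exact Finset.union_subset_union ih₁ ih₂
  | step E x c ih =>
    refine (MvPolynomial.vars_add_subset _ _).trans ?_
    simp only [LDE.vars, MvPolynomial.vars_C, Finset.union_empty]
    refine (MvPolynomial.vars_mul _ _).trans ?_
    refine Finset.union_subset (ih.trans (Finset.subset_insert _ _)) ?_
    rw [MvPolynomial.vars_X]
    simp

lemma LDE.support_subset (E : LDE) (m : ℕ →₀ ℕ) (hm : MvPolynomial.coeff m E.poly ≠ 0) :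
    m.support ⊆ E.vars := by
  intro x hx
  apply E.vars_poly_subset
  rw [MvPolynomial.mem_vars]
  exact ⟨m, MvPolynomial.mem_support_iff.2 hm, hx⟩

lemma mono_apply (s : Finset ℕ) (x : ℕ) :
    (∑ y ∈ s, Finsupp.single y (1 : ℕ)) x = if x ∈ s then 1 else 0 := by
  rw [Finsupp.finset_sum_apply]
  simp [Finsupp.single_apply]

set_option maxHeartbeats 1000000 in
lemma coeff_mul_disjoint (f g : MvPolynomial ℕ ℤ) (s t : Finset ℕ)
    (hf : ∀ m, MvPolynomial.coeff m f ≠ 0 → m.support ⊆ s)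
    (hg : ∀ m, MvPolynomial.coeff m g ≠ 0 → m.support ⊆ t)
    (hst : Disjoint s t) :
    MvPolynomial.coeff (∑ x ∈ s ∪ t, Finsupp.single x 1) (f * g) =
      MvPolynomial.coeff (∑ x ∈ s, Finsupp.single x 1) f *
        MvPolynomial.coeff (∑ x ∈ t, Finsupp.single x 1) g := by
  set ds : ℕ →₀ ℕ := ∑ x ∈ s, Finsupp.single x 1 with hds
  set dt : ℕ →₀ ℕ := ∑ x ∈ t, Finsupp.single x 1 with hdt
  have hsum : (∑ x ∈ s ∪ t, Finsupp.single x (1:ℕ)) = ds + dt := by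
    rw [hds, hdt, Finset.sum_union hst]
  rw [MvPolynomial.coeff_mul, hsum]
  refine Finset.sum_eq_single (ds, dt) ?_ ?_
  · intro b hb hbne
    rw [Finset.HasAntidiagonal.mem_antidiagonal] at hb
    by_contra hcontra
    have hf1 : MvPolynomial.coeff b.1 f ≠ 0 := fun h => hcontra (by simp [h])
    have hg1 : MvPolynomial.coeff b.2 g ≠ 0 := fun h => hcontra (by simp [h])
    have hb1 : b.1.support ⊆ s := hf b.1 hf1
    have hb2 : b.2.support ⊆ t := hg b.2 hg1
    have hb1eq : b.1 = ds := by
      ext x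
      have happ : b.1 x + b.2 x = ds x + dt x := by
        have := congrFun (congrArg (fun (f : ℕ →₀ ℕ) => ⇑f) hb) x
        simpa using this
      rw [hds, mono_apply]
      by_cases hx : x ∈ s
      · have hxt : x ∉ t := Finset.disjoint_left.1 hst hx
        have h2 : b.2 x = 0 := Finsupp.notMem_support_iff.1 (fun h => hxt (hb2 h))
        have hdsx : ds x = 1 := by rw [hds, mono_apply]; simp [hx]
        have hdtx : dt x = 0 := by rw [hdt, mono_apply]; simp [hxt]
        simp only [hx, if_true]
        omega
      · have h1 : b.1 x = 0 := Finsupp.notMem_support_iff.1 (fun h => hx (hb1 h))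
        simp [hx, h1]
    have hb2eq : b.2 = dt := by
      have h' := hb
      rw [hb1eq] at h'
      exact add_left_cancel h'
    exact hbne (Prod.ext hb1eq hb2eq)
  · intro hmem
    rw [Finset.HasAntidiagonal.mem_antidiagonal] at hmem
    exact absurd rfl hmem

/-- Main computation: the leading coefficient equals `labelProd` of the tree. -/
lemma LDE.leading_coeff_eq (E : LDE) (hE : E.WF) :
    MvPolynomial.coeff (∑ x ∈ E.vars, Finsupp.single x 1) E.poly =
      (E.tree.labelProd : ℤ) := by
  induction E with
  | const n =>
    show MvPolynomial.coeff (∑ x ∈ (∅ : Finset ℕ), Finsupp.single x 1)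
      (MvPolynomial.C (n:ℤ)) = ((LDT.node n []).labelProd : ℤ)
    rw [Finset.sum_empty, MvPolynomial.coeff_zero_C]
    simp [LDT.labelProd, LDT.labelProdAux]
  | mul E₁ E₂ ih₁ ih₂ =>
    obtain ⟨h₁, h₂, hdisj⟩ := hE
    show MvPolynomial.coeff (∑ x ∈ E₁.vars ∪ E₂.vars, Finsupp.single x 1)
      (E₁.poly * E₂.poly) = _
    rw [coeff_mul_disjoint _ _ _ _ (fun m hm => E₁.support_subset m hm)
      (fun m hm => E₂.support_subset m hm) hdisj, ih₁ h₁, ih₂ h₂]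
    have htree : (LDE.mul E₁ E₂).tree.labelProd =
        E₁.tree.labelProd * E₂.tree.labelProd := by
      show (LDT.node (E₁.tree.label * E₂.tree.label)
        (E₁.tree.children ++ E₂.tree.children)).labelProd = _
      rw [LDT.labelProd, LDT.labelProdAux_append, LDT.labelProd_eq E₁.tree,
        LDT.labelProd_eq E₂.tree]
      ring
    rw [htree]
    push_cast
    ring
  | step E x c ih =>
    obtain ⟨hwf, hx, hc⟩ := hE
    show MvPolynomial.coeff (∑ y ∈ insert x E.vars, Finsupp.single y 1)
      (E.poly * MvPolynomial.X x + MvPolynomial.C (c : ℤ)) = _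
    rw [Finset.sum_insert hx, MvPolynomial.coeff_add]
    have hne : Finsupp.single x 1 + (∑ y ∈ E.vars, Finsupp.single y 1) ≠ 0 := by
      intro h
      have := congrFun (congrArg (fun (f : ℕ →₀ ℕ) => ⇑f) h) x
      simp only [Finsupp.coe_add, Pi.add_apply, Finsupp.single_eq_same,
        Finsupp.coe_zero, Pi.zero_apply] at this
      omega
    rw [MvPolynomial.coeff_C, if_neg (fun h => hne h.symm), add_zero,
      add_comm (Finsupp.single x 1), MvPolynomial.coeff_mul_X, ih hwf]
    have htree : (LDE.step E x c).tree.labelProd = E.tree.labelProd := by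
      show (LDT.node 1 [(c, E.tree)]).labelProd = _
      simp [LDT.labelProd, LDT.labelProdAux]
    rw [htree]

/-- The leading coefficient of the polynomial of a low-defect
expression `E` (the coefficient of the product of all its variables) equals the
product of all the vertex labels of `T(E)`. -/
theorem leading_coeff_eq_prod_vertex_labels (E : LDE) (hE : E.WF) :
    MvPolynomial.coeff (∑ x ∈ E.vars, Finsupp.single x 1) E.poly =
      (∏ p ∈ E.tree.vertFinset, (E.tree.labelAt p) : ℕ) := by
  rw [LDT.prod_vertFinset]
  exact E.leading_coeff_eq hE
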